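/- The number of facts is an inherent statistical feature: fix a finite set of rules R, a finite pool Ω of predicates with |Ω| = n, and a query predicate q. For r < n, among the r-element subsets F ⊆ Ω, let p(r) be the fraction for which q is provable from facts F and rules R. Then p is nondecreasing: p(r) ≤ p(r+1) for every r < n; equivalently, |{F ⊆ Ω : |F| = r, q provable from (F, R)}| · C(n, r+1) ≤ |{F ⊆ Ω : |F| = r+1, q provable from (F, R)}| · C(n, r). -/

import Mathlib

/-- Provability of a predicate from facts `F` and definite-clause rules `R`. -/
inductive Provable {V : Type*} (F : Set V) (R : Set (Finset V × V)) : V → Prop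
  | fact (q : V) : q ∈ F → Provable F R q
  | rule (B : Finset V) (h : V) : (B, h) ∈ R → (∀ b ∈ B, Provable F R b) → Provable F R h

lemma Provable.mono {V : Type*} {F F' : Set V} {R : Set (Finset V × V)} {q : V}
    (hF : F ⊆ F') (h : Provable F R q) : Provable F' R q := by
  induction h with
  | fact q hq => exact Provable.fact q (hF hq)
  | rule B h hR _ ih => exact Provable.rule B h hR ih

open scoped Classical in
lemma bind_pure_eq_image {α β : Type u} (s : Finset α) (f : α → β) :
    (s >>= fun a => pure (f a)) = s.image f := by
  ext x
  simp [Bind.bind, Pure.pure, Finset.sup_eq_biUnion, eq_comm]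

open scoped Classical in
theorem num_facts_statistical_feature {V : Type*} [DecidableEq V]
    (R : Finset (Finset V × V)) (Ω : Finset V) (q : V)
    {n : ℕ} (hn : n = Ω.card) :
    ∀ r < n,
      ((Ω.powersetCard r).filter
          (fun F => Provable (↑F : Set V) (↑R : Set (Finset V × V)) q)).card *
          Nat.choose n (r + 1) ≤
        ((Ω.powersetCard (r + 1)).filter
            (fun F => Provable (↑F : Set V) (↑R : Set (Finset V × V)) q)).card *
          Nat.choose n r := by
  intro r hr
  simp only [bind_pure_eq_image, Finset.filter_image,
    Finset.card_image_of_injective _ Finset.coe_injective]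
  set A := (Ω.powersetCard r).filter
      (fun F : Finset V => Provable (↑F : Set V) (↑R : Set (Finset V × V)) q) with hA
  set B := (Ω.powersetCard (r + 1)).filter
      (fun F : Finset V => Provable (↑F : Set V) (↑R : Set (Finset V × V)) q) with hB
  erw [Finset.card_image_of_injective A SetLike.coe_injective,
    Finset.card_image_of_injective B SetLike.coe_injective]
  show A.card * n.choose (r + 1) ≤ B.card * n.choose r
  -- key double counting: A.card * (n - r) ≤ B.card * (r + 1)
  have key : A.card * (n - r) ≤ B.card * (r + 1) := by
    apply Finset.card_mul_le_card_mul (fun F G => F ⊆ G)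
    · intro F hF
      obtain ⟨hFmem, hFprov⟩ := Finset.mem_filter.1 hF
      obtain ⟨hFΩ, hFcard⟩ := Finset.mem_powersetCard.1 hFmem
      have hdiff : (Ω \ F).card = n - r := by
        rw [Finset.card_sdiff_of_subset hFΩ, hFcard, hn]
      rw [← hdiff]
      apply Finset.card_le_card_of_injOn (fun x => insert x F)
      · intro x hx
        simp only [Finset.mem_coe, Finset.mem_sdiff] at hx
        refine (Finset.mem_bipartiteAbove _).2 ⟨Finset.mem_filter.2
          ⟨Finset.mem_powersetCard.2 ⟨Finset.insert_subset hx.1 hFΩ, ?_⟩, ?_⟩,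
          Finset.subset_insert _ _⟩
        · rw [Finset.card_insert_of_notMem hx.2, hFcard]
        · exact hFprov.mono (by exact_mod_cast Finset.subset_insert x F)
      · intro x hx y hy hxy
        simp only [Finset.mem_coe, Finset.mem_sdiff] at hx hy
        by_contra hne
        have hxy' : insert x F = insert y F := hxy
        have : x ∈ insert y F := hxy' ▸ Finset.mem_insert_self x F
        rcases Finset.mem_insert.1 this with h | h
        · exact hne h
        · exact hx.2 h
    · intro G hG
      obtain ⟨hGmem, _⟩ := Finset.mem_filter.1 hG
      obtain ⟨hGΩ, hGcard⟩ := Finset.mem_powersetCard.1 hGmem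
      calc (A.bipartiteBelow (fun F G => F ⊆ G) G).card
          ≤ (G.powersetCard r).card := by
            apply Finset.card_le_card
            intro F hF
            obtain ⟨hF1, hF2⟩ := (Finset.mem_bipartiteBelow _).1 hF
            obtain ⟨hFmem, _⟩ := Finset.mem_filter.1 hF1
            exact Finset.mem_powersetCard.2 ⟨hF2, (Finset.mem_powersetCard.1 hFmem).2⟩
        _ = r + 1 := by rw [Finset.card_powersetCard, hGcard, Nat.choose_succ_self_right]
  -- convert to the binomial form
  have hpos : 0 < r + 1 := Nat.succ_pos r
  apply Nat.le_of_mul_le_mul_right _ hpos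
  calc A.card * n.choose (r + 1) * (r + 1)
      = A.card * (n.choose (r + 1) * (r + 1)) := by ring
    _ = A.card * (n.choose r * (n - r)) := by rw [Nat.choose_succ_right_eq]
    _ = A.card * (n - r) * n.choose r := by ring
    _ ≤ B.card * (r + 1) * n.choose r := Nat.mul_le_mul_right _ key
    _ = B.card * n.choose r * (r + 1) := by ring
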